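/- For positive integers d1, d2, d3, there exists a rational function f on the Riemann sphere with exactly three critical points at 0, 1, ∞ having local degrees d1, d2, d3 respectively, only if d1 + d2 + d3 is odd and each of d1, d2, d3 is strictly less than the sum of the other two. -/

import Mathlib

open Polynomial

/-- Local degree at a finite point `z` of the rational map `P/Q` (with `P, Q` coprime),
viewed as a map of the Riemann sphere: at a pole it is the order of the pole, otherwise
it is the multiplicity of the zero of `f - f(z)` at `z`. -/
noncomputable def ratLocalDeg (P Q : Polynomial ℂ) (z : ℂ) : ℕ :=
  if Q.eval z = 0 then Q.rootMultiplicity z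
  else (P * Polynomial.C (Q.eval z) - Q * Polynomial.C (P.eval z)).rootMultiplicity z

/-- Local degree of the rational map `P/Q` at `∞`, computed via the substitution
`z ↦ 1/z` (coefficient reversal up to the degree of the map). -/
noncomputable def ratLocalDegInf (P Q : Polynomial ℂ) : ℕ :=
  ratLocalDeg (P.reflect (max P.natDegree Q.natDegree))
    (Q.reflect (max P.natDegree Q.natDegree)) 0

namespace RatAux

noncomputable def wron (P Q : Polynomial ℂ) : Polynomial ℂ :=
  derivative P * Q - P * derivative Q

lemma rm_le_natDegree {p : Polynomial ℂ} (hp : p ≠ 0) (a : ℂ) :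
    rootMultiplicity a p ≤ p.natDegree := by
  have h := natDegree_le_of_dvd (pow_rootMultiplicity_dvd p a) hp
  simpa using h

lemma rm_neg (a : ℂ) (p : Polynomial ℂ) :
    rootMultiplicity a (-p) = rootMultiplicity a p := by
  by_cases hp : p = 0
  · simp [hp]
  have hnp : -p ≠ 0 := neg_ne_zero.mpr hp
  apply le_antisymm
  · exact (le_rootMultiplicity_iff hp).mpr (dvd_neg.mp (pow_rootMultiplicity_dvd (-p) a))
  · exact (le_rootMultiplicity_iff hnp).mpr (dvd_neg.mpr (pow_rootMultiplicity_dvd p a))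

lemma rm_sub_left {p q : Polynomial ℂ} {a : ℂ} (hp : p ≠ 0)
    (h : rootMultiplicity a p < rootMultiplicity a q) :
    rootMultiplicity a (p - q) = rootMultiplicity a p := by
  have hpq : p - q ≠ 0 := by
    intro h0
    rw [sub_eq_zero.mp h0] at h
    exact lt_irrefl _ h
  apply le_antisymm
  · by_contra hlt
    push_neg at hlt
    have h1 : (X - C a) ^ (rootMultiplicity a p + 1) ∣ p - q :=
      (pow_dvd_pow _ hlt).trans (pow_rootMultiplicity_dvd _ a)
    have h2 : (X - C a) ^ (rootMultiplicity a p + 1) ∣ q :=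
      (pow_dvd_pow _ h).trans (pow_rootMultiplicity_dvd _ a)
    have h3 : (X - C a) ^ (rootMultiplicity a p + 1) ∣ p := by
      have := dvd_add h1 h2
      simpa using this
    exact pow_rootMultiplicity_not_dvd hp a h3
  · have hmin := rootMultiplicity_add (p := p) (q := -q) a
      (by simpa [sub_eq_add_neg] using hpq)
    rw [rm_neg] at hmin
    rw [min_eq_left h.le] at hmin
    simpa [sub_eq_add_neg] using hmin

lemma eval_ne_zero_of_coprime {P Q : Polynomial ℂ} (h : IsCoprime P Q) {z : ℂ}
    (hQ : Q.eval z = 0) : P.eval z ≠ 0 := by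
  obtain ⟨a, b, hab⟩ := h
  intro hP
  have := congrArg (eval z) hab
  simp [hP, hQ] at this

lemma ne_zero_of_coprime {P Q : Polynomial ℂ} (hco : IsCoprime P Q)
    (hd : 0 < max P.natDegree Q.natDegree) : P ≠ 0 ∧ Q ≠ 0 := by
  constructor
  · rintro rfl
    have h := isCoprime_zero_left.mp hco
    have := natDegree_eq_zero_of_isUnit h
    simp [this] at hd
  · rintro rfl
    have h := isCoprime_zero_right.mp hco
    have := natDegree_eq_zero_of_isUnit h
    simp [this] at hd

lemma wron_ne_zero {P Q : Polynomial ℂ} (hco : IsCoprime P Q)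
    (hd : 0 < max P.natDegree Q.natDegree) : wron P Q ≠ 0 := by
  obtain ⟨hP0, hQ0⟩ := ne_zero_of_coprime hco hd
  intro h0
  have hPQ : derivative P * Q = P * derivative Q := sub_eq_zero.mp h0
  have hdP : P.natDegree = 0 := by
    by_cases hP' : derivative P = 0
    · exact natDegree_eq_zero_of_derivative_eq_zero hP'
    · have hdvd : P ∣ derivative P := by
        refine hco.dvd_of_dvd_mul_right ?_
        exact ⟨derivative Q, hPQ⟩
      have h1 := natDegree_le_of_dvd hdvd hP'
      have h2 := natDegree_derivative_le P
      omega
  have hdQ : Q.natDegree = 0 := by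
    by_cases hQ' : derivative Q = 0
    · exact natDegree_eq_zero_of_derivative_eq_zero hQ'
    · have hdvd : Q ∣ derivative Q := by
        refine hco.symm.dvd_of_dvd_mul_right ?_
        exact ⟨derivative P, by rw [mul_comm] at hPQ ⊢; exact hPQ.symm⟩
      have h1 := natDegree_le_of_dvd hdvd hQ'
      have h2 := natDegree_derivative_le Q
      omega
  omega


lemma finite_key {P Q : Polynomial ℂ} (hco : IsCoprime P Q)
    (hd : 0 < max P.natDegree Q.natDegree) (z : ℂ) :
    ratLocalDeg P Q z = rootMultiplicity z (wron P Q) + 1 ∧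
    ratLocalDeg P Q z ≤ max P.natDegree Q.natDegree := by
  obtain ⟨hP0, hQ0⟩ := ne_zero_of_coprime hco hd
  by_cases hQz : Q.eval z = 0
  · -- pole case
    set m := rootMultiplicity z Q with hm_def
    have hm : 0 < m := (rootMultiplicity_pos hQ0).mpr hQz
    have hPz : P.eval z ≠ 0 := eval_ne_zero_of_coprime hco hQz
    have hQ' : derivative Q ≠ 0 := by
      intro h
      have h0 := natDegree_eq_zero_of_derivative_eq_zero h
      have hc := eq_C_of_natDegree_eq_zero h0
      rw [hc] at hQz
      simp at hQz
      rw [hc, hQz] at hQ0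
      simp at hQ0
    have hrmQ' : rootMultiplicity z (derivative Q) = m - 1 :=
      derivative_rootMultiplicity_of_root hQz
    have hrmP : rootMultiplicity z P = 0 := rootMultiplicity_eq_zero hPz
    have hrmPQ' : rootMultiplicity z (P * derivative Q) = m - 1 := by
      rw [rootMultiplicity_mul (mul_ne_zero hP0 hQ'), hrmP, hrmQ', zero_add]
    have hwr : rootMultiplicity z (wron P Q) = m - 1 := by
      by_cases hP' : derivative P = 0
      · have hw : wron P Q = -(P * derivative Q) := by simp [wron, hP']
        rw [hw, rm_neg, hrmPQ']
      · have hge : m ≤ rootMultiplicity z (derivative P * Q) := by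
          have := le_rootMultiplicity_mul z (mul_ne_zero hP' hQ0) (p := derivative P) (q := Q)
          omega
        have hw : wron P Q = -(P * derivative Q - derivative P * Q) := by
          unfold wron; ring
        rw [hw, rm_neg, rm_sub_left (mul_ne_zero hP0 hQ') (by omega), hrmPQ']
    have hld : ratLocalDeg P Q z = m := by
      simp only [ratLocalDeg, if_pos hQz, hm_def]
    refine ⟨by omega, ?_⟩
    rw [hld]
    exact le_trans (rm_le_natDegree hQ0 z) (le_max_right _ _)
  · -- non-pole case
    set G := P * C (Q.eval z) - Q * C (P.eval z) with hG_def
    have hGz : G.eval z = 0 := by simp [hG_def]; ring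
    have hW : wron P Q ≠ 0 := wron_ne_zero hco hd
    have hCQ : (C (Q.eval z) : Polynomial ℂ) ≠ 0 := by simpa using hQz
    have hG0 : G ≠ 0 := by
      intro h0
      have heq : P * C (Q.eval z) = Q * C (P.eval z) := by
        rw [hG_def] at h0; exact sub_eq_zero.mp h0
      have hQdvd : Q ∣ C (Q.eval z) := by
        refine hco.symm.dvd_of_dvd_mul_right ?_
        exact ⟨C (P.eval z), by rw [mul_comm (C (Q.eval z)) P]; exact heq⟩
      have h1 : Q.natDegree = 0 := by
        have := natDegree_le_of_dvd hQdvd hCQ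
        simpa using this
      have h2 : P.natDegree = 0 := by
        have hP' : P.natDegree ≤ (Q * C (P.eval z)).natDegree := by
          rw [← heq, natDegree_mul hP0 hCQ]; simp
        have hle := natDegree_mul_le (p := Q) (q := C (P.eval z))
        simp only [natDegree_C, add_zero] at hle
        omega
      omega
    set m := rootMultiplicity z G with hm_def
    have hm : 0 < m := (rootMultiplicity_pos hG0).mpr hGz
    have hG' : derivative G ≠ 0 := by
      intro h
      have h0 := natDegree_eq_zero_of_derivative_eq_zero h
      have hc := eq_C_of_natDegree_eq_zero h0
      rw [hc] at hGz
      simp at hGz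
      rw [hc, hGz] at hG0
      simp at hG0
    have hrmG' : rootMultiplicity z (derivative G) = m - 1 :=
      derivative_rootMultiplicity_of_root hGz
    have hrmQ : rootMultiplicity z Q = 0 := rootMultiplicity_eq_zero hQz
    have hrmQG' : rootMultiplicity z (Q * derivative G) = m - 1 := by
      rw [rootMultiplicity_mul (mul_ne_zero hQ0 hG'), hrmQ, hrmG', zero_add]
    have hid : C (Q.eval z) * wron P Q = Q * derivative G - derivative Q * G := by
      simp only [hG_def, wron, derivative_sub, derivative_mul, derivative_C]
      ring
    have hrmCW : rootMultiplicity z (C (Q.eval z) * wron P Q)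
        = rootMultiplicity z (wron P Q) := by
      rw [rootMultiplicity_mul (mul_ne_zero hCQ hW),
        rootMultiplicity_eq_zero (by simp [hQz] : ¬IsRoot (C (Q.eval z)) z), zero_add]
    have hwr : rootMultiplicity z (wron P Q) = m - 1 := by
      rw [← hrmCW, hid]
      by_cases hQ' : derivative Q = 0
      · rw [hQ']
        simpa using hrmQG'
      · have hge : m ≤ rootMultiplicity z (derivative Q * G) := by
          have := le_rootMultiplicity_mul z (mul_ne_zero hQ' hG0) (p := derivative Q) (q := G)
          omega
        rw [rm_sub_left (mul_ne_zero hQ0 hG') (by omega), hrmQG']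
    have hld : ratLocalDeg P Q z = m := by
      simp only [ratLocalDeg, if_neg hQz, hm_def, hG_def]
    refine ⟨by omega, ?_⟩
    rw [hld]
    have hdeg : G.natDegree ≤ max P.natDegree Q.natDegree := by
      refine le_trans (by rw [hG_def] : G.natDegree ≤ (P * C (Q.eval z) - Q * C (P.eval z)).natDegree)
        (le_trans (natDegree_sub_le _ _) ?_)
      have h1 := natDegree_mul_le (p := P) (q := C (Q.eval z))
      have h2 := natDegree_mul_le (p := Q) (q := C (P.eval z))
      simp only [natDegree_C, add_zero] at h1 h2
      simp only [max_le_iff]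
      constructor
      · exact le_trans h1 (le_max_left _ _)
      · exact le_trans h2 (le_max_right _ _)
    exact le_trans (rm_le_natDegree hG0 z) hdeg


/-- coefficient of `derivative A * B` in top degree position -/
lemma coeff_deriv_mul (A B : Polynomial ℂ) :
    (derivative A * B).coeff (A.natDegree + B.natDegree - 1)
      = (A.natDegree : ℂ) * A.leadingCoeff * B.leadingCoeff := by
  rcases Nat.eq_zero_or_pos A.natDegree with ha | ha
  · have hA' : derivative A = 0 := by
      rw [eq_C_of_natDegree_eq_zero ha]; simp
    rw [hA', ha]
    simp
  · have hA0 : A ≠ 0 := by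
      intro h; rw [h] at ha; simp at ha
    have hcA' : (derivative A).coeff (A.natDegree - 1) = (A.natDegree : ℂ) * A.leadingCoeff := by
      rw [coeff_derivative]
      have h1 : A.natDegree - 1 + 1 = A.natDegree := by omega
      rw [h1, leadingCoeff, Nat.cast_pred ha]
      ring
    have hA'ne : (derivative A).coeff (A.natDegree - 1) ≠ 0 := by
      rw [hcA']
      exact mul_ne_zero (by exact_mod_cast ha.ne') (leadingCoeff_ne_zero.mpr hA0)
    have hdA' : (derivative A).natDegree = A.natDegree - 1 :=
      le_antisymm (natDegree_derivative_le A) (le_natDegree_of_ne_zero hA'ne)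
    have key := coeff_mul_degree_add_degree (derivative A) B
    rw [hdA'] at key
    have h2 : A.natDegree - 1 + B.natDegree = A.natDegree + B.natDegree - 1 := by omega
    rw [h2] at key
    rw [key, leadingCoeff, hdA', hcA']

lemma natDegree_deriv_mul_le (A B : Polynomial ℂ) :
    (derivative A * B).natDegree ≤ A.natDegree + B.natDegree - 1 := by
  rcases Nat.eq_zero_or_pos A.natDegree with ha | ha
  · have hA' : derivative A = 0 := by
      rw [eq_C_of_natDegree_eq_zero ha]; simp
    rw [hA']
    simp
  · refine le_trans natDegree_mul_le ?_
    have := natDegree_derivative_le A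
    omega

lemma natDegree_wron {A B : Polynomial ℂ} (hA : A ≠ 0) (hB : B ≠ 0)
    (h : A.natDegree ≠ B.natDegree) :
    (wron A B).natDegree + 1 = A.natDegree + B.natDegree := by
  set a := A.natDegree with ha_def
  set b := B.natDegree with hb_def
  have hcoeff : (wron A B).coeff (a + b - 1)
      = ((a : ℂ) - (b : ℂ)) * (A.leadingCoeff * B.leadingCoeff) := by
    have h1 := coeff_deriv_mul A B
    have h2 := coeff_deriv_mul B A
    rw [show B.natDegree + A.natDegree - 1 = a + b - 1 by omega] at h2
    unfold wron
    rw [coeff_sub, h1, show (A * derivative B).coeff (a + b - 1)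
      = (derivative B * A).coeff (a + b - 1) by rw [mul_comm], h2]
    ring
  have hne : (wron A B).coeff (a + b - 1) ≠ 0 := by
    rw [hcoeff]
    refine mul_ne_zero ?_ (mul_ne_zero (leadingCoeff_ne_zero.mpr hA) (leadingCoeff_ne_zero.mpr hB))
    intro hc
    have : (a : ℂ) = (b : ℂ) := by linear_combination hc
    exact h (by exact_mod_cast this)
  have hle : (wron A B).natDegree ≤ a + b - 1 := by
    refine le_trans (natDegree_sub_le _ _) ?_
    have h1 := natDegree_deriv_mul_le A B
    have h2 := natDegree_deriv_mul_le B A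
    rw [show (A * derivative B) = (derivative B * A) by ring] at *
    simp only [max_le_iff]
    exact ⟨h1, by omega⟩
  have hge := le_natDegree_of_ne_zero hne
  omega

lemma ntd_reflect {p : Polynomial ℂ} (hp : p ≠ 0) {N : ℕ} (h : p.natDegree ≤ N) :
    (p.reflect N).natTrailingDegree = N - p.natDegree := by
  have hr : p.reflect N ≠ 0 := by
    simpa [reflect_eq_zero_iff] using hp
  apply le_antisymm
  · apply natTrailingDegree_le_of_ne_zero
    rw [coeff_reflect, revAt_le (by omega : N - p.natDegree ≤ N),
      show N - (N - p.natDegree) = p.natDegree by omega]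
    exact fun hc => hp (leadingCoeff_eq_zero.mp hc)
  · apply le_natTrailingDegree hr
    intro m hm
    rw [coeff_reflect, revAt_le (by omega : m ≤ N)]
    exact coeff_eq_zero_of_natDegree_lt (by omega)


lemma rm_zero_eq_ntd (p : Polynomial ℂ) :
    rootMultiplicity 0 p = p.natTrailingDegree :=
  rootMultiplicity_eq_natTrailingDegree'

lemma inf_key {P Q : Polynomial ℂ} (hco : IsCoprime P Q)
    (hd : 0 < max P.natDegree Q.natDegree) :
    (wron P Q).natDegree + 1 + ratLocalDegInf P Q = 2 * max P.natDegree Q.natDegree ∧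
    ratLocalDegInf P Q ≤ max P.natDegree Q.natDegree := by
  obtain ⟨hP0, hQ0⟩ := ne_zero_of_coprime hco hd
  set d := max P.natDegree Q.natDegree with hd_def
  have hPle : P.natDegree ≤ d := le_max_left _ _
  have hQle : Q.natDegree ≤ d := le_max_right _ _
  by_cases hcase : Q.natDegree < P.natDegree
  · have hdP : d = P.natDegree := max_eq_left hcase.le
    have hQe : (Q.reflect d).eval 0 = 0 := by
      rw [← coeff_zero_eq_eval_zero, coeff_reflect, revAt_le (Nat.zero_le d), Nat.sub_zero]
      exact coeff_eq_zero_of_natDegree_lt (by omega)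
    have hld : ratLocalDegInf P Q = d - Q.natDegree := by
      rw [ratLocalDegInf, ratLocalDeg, if_pos hQe, ← hd_def, rm_zero_eq_ntd,
        ntd_reflect hQ0 hQle]
    have hw := natDegree_wron hP0 hQ0 (by omega)
    constructor
    · omega
    · omega
  · push_neg at hcase
    have hdQ : d = Q.natDegree := max_eq_right hcase
    have hq0 : Q.coeff d ≠ 0 := by
      rw [hdQ]
      exact fun hc => hQ0 (leadingCoeff_eq_zero.mp hc)
    have hQe : (Q.reflect d).eval 0 = Q.coeff d := by
      rw [← coeff_zero_eq_eval_zero, coeff_reflect, revAt_le (Nat.zero_le d), Nat.sub_zero]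
    have hPe : (P.reflect d).eval 0 = P.coeff d := by
      rw [← coeff_zero_eq_eval_zero, coeff_reflect, revAt_le (Nat.zero_le d), Nat.sub_zero]
    set R := P * C (Q.coeff d) - Q * C (P.coeff d) with hR_def
    have hCq : (C (Q.coeff d) : Polynomial ℂ) ≠ 0 := by simpa using hq0
    have hR0 : R ≠ 0 := by
      intro h0
      have heq : P * C (Q.coeff d) = Q * C (P.coeff d) := by
        rw [hR_def] at h0; exact sub_eq_zero.mp h0
      have hQdvd : Q ∣ C (Q.coeff d) := by
        refine hco.symm.dvd_of_dvd_mul_right ?_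
        exact ⟨C (P.coeff d), by rw [mul_comm (C (Q.coeff d)) P]; exact heq⟩
      have h1 : Q.natDegree = 0 := by
        have := natDegree_le_of_dvd hQdvd hCq
        simpa using this
      omega
    have hRle : R.natDegree ≤ d := by
      rw [hR_def]
      refine le_trans (natDegree_sub_le _ _) ?_
      have h1 := natDegree_mul_le (p := P) (q := C (Q.coeff d))
      have h2 := natDegree_mul_le (p := Q) (q := C (P.coeff d))
      simp only [natDegree_C, add_zero] at h1 h2
      simp only [max_le_iff]
      omega
    have hRcoeff : R.coeff d = 0 := by
      rw [hR_def, coeff_sub, coeff_mul_C, coeff_mul_C]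
      ring
    have hRlt : R.natDegree < d := by
      rcases lt_or_eq_of_le hRle with h | h
      · exact h
      · exfalso
        apply hR0
        apply leadingCoeff_eq_zero.mp
        rw [leadingCoeff, h, hRcoeff]
    have hrefl : (P.reflect d) * C (Q.coeff d) - (Q.reflect d) * C (P.coeff d)
        = R.reflect d := by
      rw [hR_def, reflect_sub, mul_comm (P.reflect d), mul_comm (Q.reflect d),
        ← reflect_C_mul, ← reflect_C_mul, mul_comm (C (Q.coeff d)) P,
        mul_comm (C (P.coeff d)) Q]
    have hld : ratLocalDegInf P Q = d - R.natDegree := by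
      rw [ratLocalDegInf, ratLocalDeg, ← hd_def, if_neg (by rw [hQe]; exact hq0),
        hQe, hPe, hrefl, rm_zero_eq_ntd, ntd_reflect hR0 hRle]
    have hwr : wron R Q = C (Q.coeff d) * wron P Q := by
      rw [hR_def]
      unfold wron
      rw [derivative_sub, derivative_mul, derivative_mul, derivative_C, derivative_C]
      ring
    have hwdeg : (wron R Q).natDegree = (wron P Q).natDegree := by
      rw [hwr, natDegree_C_mul hq0]
    have hw := natDegree_wron hR0 hQ0 (by omega)
    rw [hwdeg] at hw
    constructor
    · omega
    · omega


end RatAux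

/-- If there exists a nonconstant rational function on the Riemann sphere whose only
critical points are `0`, `1`, `∞`, with local degrees `d₁, d₂, d₃` there, then
`d₁ + d₂ + d₃` is odd and each `dⱼ` is less than the sum of the other two. -/
theorem rational_three_critical_points_necessary
    (d1 d2 d3 : ℕ) (h1 : 0 < d1) (h2 : 0 < d2) (h3 : 0 < d3)
    (hex : ∃ P Q : Polynomial ℂ, IsCoprime P Q ∧ 0 < max P.natDegree Q.natDegree ∧
      ratLocalDeg P Q 0 = d1 ∧ ratLocalDeg P Q 1 = d2 ∧ ratLocalDegInf P Q = d3 ∧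
      ∀ z : ℂ, z ≠ 0 → z ≠ 1 → ratLocalDeg P Q z = 1) :
    Odd (d1 + d2 + d3) ∧ d1 < d2 + d3 ∧ d2 < d1 + d3 ∧ d3 < d1 + d2 := by
  classical
  obtain ⟨P, Q, hco, hd, e1, e2, e3, hreg⟩ := hex
  set d := max P.natDegree Q.natDegree with hd_def
  have hW : RatAux.wron P Q ≠ 0 := RatAux.wron_ne_zero hco hd
  have hfin := fun z => RatAux.finite_key hco hd z
  have h10 : d1 = rootMultiplicity 0 (RatAux.wron P Q) + 1 := by
    rw [← e1]; exact (hfin 0).1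
  have h20 : d2 = rootMultiplicity 1 (RatAux.wron P Q) + 1 := by
    rw [← e2]; exact (hfin 1).1
  have h1le : d1 ≤ d := by rw [← e1]; exact (hfin 0).2
  have h2le : d2 ≤ d := by rw [← e2]; exact (hfin 1).2
  have hinf := RatAux.inf_key hco hd
  rw [e3] at hinf
  have hsub : (RatAux.wron P Q).roots.toFinset ⊆ ({0, 1} : Finset ℂ) := by
    intro x hx
    rw [Multiset.mem_toFinset, mem_roots hW] at hx
    by_contra hne
    simp only [Finset.mem_insert, Finset.mem_singleton] at hne
    push_neg at hne
    have hr := hreg x hne.1 hne.2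
    have hfx := (hfin x).1
    rw [hr] at hfx
    have hrm : rootMultiplicity x (RatAux.wron P Q) = 0 := by omega
    have := (rootMultiplicity_pos hW).mpr hx
    omega
  have hcard : (RatAux.wron P Q).roots.card = (RatAux.wron P Q).natDegree := by
    have hs : Splits (RatAux.wron P Q) := IsAlgClosed.splits _
    have := hs.natDegree_eq_card_roots
    rwa [eq_comm] at this
  have hsum : (RatAux.wron P Q).natDegree
      = rootMultiplicity 0 (RatAux.wron P Q) + rootMultiplicity 1 (RatAux.wron P Q) := by
    rw [← hcard, ← count_roots, ← count_roots, ← Multiset.toFinset_sum_count_eq,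
      Finset.sum_subset hsub (fun x _ hx =>
        Multiset.count_eq_zero.mpr (fun h => hx (Multiset.mem_toFinset.mpr h))),
      Finset.sum_pair (by norm_num : (0 : ℂ) ≠ 1)]
  refine ⟨⟨d, by omega⟩, by omega, by omega, by omega⟩
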